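/- Let q be an odd prime, let ν generate the group of units (ZMod q)ˣ, and set c = !![1, 0; 1, 1] and d = !![1, 0; ν, 1] in SL₂(ZMod q). If 2 is not a square in ZMod q, then c² is conjugate to d in SL₂(ZMod q) and d² is conjugate to c in SL₂(ZMod q). -/

import Mathlib

lemma conj_lower (q : ℕ) [Fact (Nat.Prime q)]
    (A B : Matrix.SpecialLinearGroup (Fin 2) (ZMod q)) (a b : ZMod q)
    (hA : (A : Matrix (Fin 2) (Fin 2) (ZMod q)) = !![1, 0; a, 1])
    (hB : (B : Matrix (Fin 2) (Fin 2) (ZMod q)) = !![1, 0; b, 1])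
    (t : (ZMod q)ˣ) (h : a = b * (t : ZMod q) ^ 2) : IsConj A B := by
  have hdet : Matrix.det !![(t : ZMod q), 0; 0, ((t⁻¹ : (ZMod q)ˣ) : ZMod q)] = 1 := by
    rw [Matrix.det_fin_two_of, mul_zero, sub_zero, ← Units.val_mul, mul_inv_cancel,
      Units.val_one]
  set g : Matrix.SpecialLinearGroup (Fin 2) (ZMod q) := ⟨_, hdet⟩ with hg
  have hgc : (g : Matrix (Fin 2) (Fin 2) (ZMod q)) =
      !![(t : ZMod q), 0; 0, ((t⁻¹ : (ZMod q)ˣ) : ZMod q)] := rfl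
  refine isConj_iff.mpr ⟨g, ?_⟩
  rw [mul_inv_eq_iff_eq_mul]
  have hmat : (g : Matrix (Fin 2) (Fin 2) (ZMod q)) * A = (B : Matrix (Fin 2) (Fin 2) (ZMod q)) * g := by
    rw [hgc, hA, hB]
    have ht0 : (t : ZMod q) ≠ 0 := t.ne_zero
    have hti : ((t⁻¹ : (ZMod q)ˣ) : ZMod q) = ((t : ZMod q))⁻¹ := by
      rw [← Units.val_inv_eq_inv_val]
    ext i j
    fin_cases i <;> fin_cases j <;>
      simp only [Matrix.mul_apply, Fin.sum_univ_two, Matrix.cons_val', Matrix.cons_val_zero,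
        Matrix.cons_val_one, Matrix.head_cons, Matrix.head_fin_const, Matrix.empty_val',
        Matrix.cons_val_fin_one, Fin.isValue, Fin.mk_one, Fin.zero_eta, hti, h, Matrix.of_apply] <;>
      field_simp <;> ring
  refine Subtype.ext ?_
  rw [Matrix.SpecialLinearGroup.coe_mul, Matrix.SpecialLinearGroup.coe_mul, hmat]

theorem sq_conj_of_not_isSquare_two (q : ℕ) [Fact (Nat.Prime q)] (hq : Odd q)
    (ν : (ZMod q)ˣ) (hν : ∀ x : (ZMod q)ˣ, x ∈ Subgroup.zpowers ν)
    (c d : Matrix.SpecialLinearGroup (Fin 2) (ZMod q))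
    (hc : (c : Matrix (Fin 2) (Fin 2) (ZMod q)) = !![1, 0; 1, 1])
    (hd : (d : Matrix (Fin 2) (Fin 2) (ZMod q)) = !![1, 0; (ν : ZMod q), 1])
    (h2 : ¬ IsSquare (2 : ZMod q)) :
    IsConj (c ^ 2) d ∧ IsConj (d ^ 2) c := by
  have h2ne : (2 : ZMod q) ≠ 0 := by
    intro h
    have h' : (q : ℕ) ∣ 2 := (ZMod.natCast_eq_zero_iff 2 q).mp (by push_cast; exact h)
    have := (Nat.prime_dvd_prime_iff_eq (Fact.out) Nat.prime_two).mp h'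
    rw [this] at hq
    exact (by decide : ¬ Odd 2) hq
  have hu : IsUnit (2 : ZMod q) := isUnit_iff_ne_zero.mpr h2ne
  obtain ⟨k, hk⟩ := hν hu.unit
  have hk : ν ^ k = hu.unit := hk
  have hodd : Odd k := by
    rcases Int.even_or_odd k with ⟨m, hm⟩ | h
    · exfalso
      apply h2
      refine ⟨((ν ^ m : (ZMod q)ˣ) : ZMod q), ?_⟩
      have h1 : (ν ^ m) * (ν ^ m) = hu.unit := by
        rw [← zpow_add, ← hm, hk]
      calc (2 : ZMod q) = ((hu.unit : (ZMod q)ˣ) : ZMod q) := by simp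
        _ = _ := by rw [← h1]; push_cast; ring
    · exact h
  obtain ⟨m, hm⟩ := hodd
  have hk' : ν ^ (2 * m + 1) = hu.unit := by rw [← hm]; exact hk
  have key1 : (2 : ZMod q) = (ν : ZMod q) * ((ν ^ m : (ZMod q)ˣ) : ZMod q) ^ 2 := by
    have h1 : ν * (ν ^ m) ^ 2 = hu.unit := by
      rw [← hk', ← zpow_natCast (ν ^ m) 2, ← zpow_mul,
        show (2 * m + 1 : ℤ) = 1 + m * ((2 : ℕ) : ℤ) by push_cast; ring, zpow_add, zpow_one]
    calc (2 : ZMod q) = ((hu.unit : (ZMod q)ˣ) : ZMod q) := by simp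
      _ = _ := by rw [← h1]; push_cast; ring
  have key2 : (2 : ZMod q) * (ν : ZMod q) = ((ν ^ (m + 1) : (ZMod q)ˣ) : ZMod q) ^ 2 := by
    have h1 : (ν ^ (m + 1)) ^ 2 = hu.unit * ν := by
      rw [← hk', ← zpow_natCast (ν ^ (m + 1)) 2, ← zpow_mul,
        show (m + 1) * ((2 : ℕ) : ℤ) = (2 * m + 1) + 1 by push_cast; ring, zpow_add, zpow_one]
    calc (2 : ZMod q) * (ν : ZMod q)
        = ((hu.unit * ν : (ZMod q)ˣ) : ZMod q) := by push_cast; simp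
      _ = ((((ν ^ (m + 1)) ^ 2 : (ZMod q)ˣ)) : ZMod q) := by rw [h1]
      _ = _ := by push_cast; ring
  have hc2 : ((c ^ 2 : Matrix.SpecialLinearGroup (Fin 2) (ZMod q)) :
      Matrix (Fin 2) (Fin 2) (ZMod q)) = !![1, 0; 2, 1] := by
    rw [Matrix.SpecialLinearGroup.coe_pow, hc, pow_two]
    ext i j
    fin_cases i <;> fin_cases j <;>
      simp [Matrix.mul_apply, Fin.sum_univ_two] <;> ring
  have hd2 : ((d ^ 2 : Matrix.SpecialLinearGroup (Fin 2) (ZMod q)) :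
      Matrix (Fin 2) (Fin 2) (ZMod q)) = !![1, 0; 2 * (ν : ZMod q), 1] := by
    rw [Matrix.SpecialLinearGroup.coe_pow, hd, pow_two]
    ext i j
    fin_cases i <;> fin_cases j <;>
      simp [Matrix.mul_apply, Fin.sum_univ_two] <;> ring
  constructor
  · exact conj_lower q _ _ 2 (ν : ZMod q) hc2 hd (ν ^ m) key1
  · refine conj_lower q _ _ (2 * (ν : ZMod q)) 1 hd2 (by rw [hc]) (ν ^ (m + 1)) ?_
    rw [one_mul, ← key2]
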